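/- Let p be a probability vector on {1,…,d}, let Ψ_1,…,Ψ_d be orthonormal vectors in ℂ^m, and let σ = ∑_{i=1}^d p_i · E_ii ⊗ |Ψ_i⟩⟨Ψ_i| be the corresponding density matrix on ℂ^d ⊗ ℂ^m. Let (B_l)_{l∈L} be any projective measurement on ℂ^d and (Y_n)_{n∈N} any projective measurement on ℂ^m. Define the joint distributions p_{AY}(i,n) = Re Tr((E_ii ⊗ Y_n) σ) and p_{BY}(l,n) = Re Tr((B_l ⊗ Y_n) σ). Then I(A:Y) ≥ I(B:Y): any measurement Y on the fragment of the environment reveals at least as much information about the pointer observable A (with spectral projectors E_ii) as about any other system observable B. -/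

import Mathlib

open Matrix Kronecker BigOperators

noncomputable section

/-- Standard Hermitian inner product on `Fin m → ℂ` (conjugate-linear in the first slot). -/
def cinner {m : ℕ} (u v : Fin m → ℂ) : ℂ :=
  ∑ k, (starRingEnd ℂ) (u k) * v k

/-- The matrix unit `E_ii`. -/
def matE {d : ℕ} (i : Fin d) : Matrix (Fin d) (Fin d) ℂ :=
  Matrix.single i i 1

/-- The rank-one projector `|v⟩⟨v|`. -/
def projVec {m : ℕ} (v : Fin m → ℂ) : Matrix (Fin m) (Fin m) ℂ :=
  Matrix.of fun k l => v k * (starRingEnd ℂ) (v l)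

/-- The perfectly correlated system–fragment state `σ = ∑ᵢ pᵢ E_ii ⊗ |Ψᵢ⟩⟨Ψᵢ|`. -/
def sigmaSF {d m : ℕ} (p : Fin d → ℝ) (Ψ : Fin d → Fin m → ℂ) :
    Matrix (Fin d × Fin m) (Fin d × Fin m) ℂ :=
  ∑ i, (p i : ℂ) • (matE i ⊗ₖ projVec (Ψ i))

/-- A projective measurement: a finite family of Hermitian, mutually orthogonal
idempotents summing to the identity. -/
def IsProjMeasurement {ι n : Type*} [Fintype ι] [DecidableEq ι] [Fintype n] [DecidableEq n]
    (P : ι → Matrix n n ℂ) : Prop :=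
  (∀ k, (P k).IsHermitian) ∧
  (∀ k l, P k * P l = if k = l then P k else 0) ∧
  (∑ k, P k = 1)

/-- Mutual information of a joint pmf `p` on `I × J`. -/
def mutualInfo {I J : Type*} [Fintype I] [Fintype J] (p : I → J → ℝ) : ℝ :=
  ∑ i, ∑ j, if p i j = 0 then 0
    else p i j * Real.log (p i j / ((∑ j', p i j') * (∑ i', p i' j)))

/-- Log-sum inequality. -/
lemma log_sum_ineq {ι : Type*} (s : Finset ι) (a b : ι → ℝ)
    (ha : ∀ i ∈ s, 0 ≤ a i) (hb : ∀ i ∈ s, 0 ≤ b i)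
    (hab : ∀ i ∈ s, b i = 0 → a i = 0) :
    (∑ i ∈ s, a i) * Real.log ((∑ i ∈ s, a i) / (∑ i ∈ s, b i)) ≤
      ∑ i ∈ s, a i * Real.log (a i / b i) := by
  rcases (Finset.sum_nonneg ha).eq_or_lt with h0 | hApos
  · have hall : ∀ i ∈ s, a i = 0 :=
      fun i hi => (Finset.sum_eq_zero_iff_of_nonneg ha).mp h0.symm i hi
    have hz : ∑ i ∈ s, a i * Real.log (a i / b i) = 0 :=
      Finset.sum_eq_zero fun i hi => by rw [hall i hi, zero_mul]
    rw [← h0, hz, zero_mul]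
  · have hBpos : 0 < ∑ i ∈ s, b i := by
      rcases (Finset.sum_nonneg hb).eq_or_lt with h0 | h
      · exfalso
        have : ∀ i ∈ s, b i = 0 :=
          fun i hi => (Finset.sum_eq_zero_iff_of_nonneg hb).mp h0.symm i hi
        have : ∀ i ∈ s, a i = 0 := fun i hi => hab i hi (this i hi)
        have : (∑ i ∈ s, a i) = 0 := Finset.sum_eq_zero this
        linarith
      · exact h
    set A := ∑ i ∈ s, a i with hA
    set Bs := ∑ i ∈ s, b i with hBs
    have key : ∀ i ∈ s,
        a i * Real.log (A / Bs) + (a i - (A / Bs) * b i) ≤ a i * Real.log (a i / b i) := by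
      intro i hi
      rcases (ha i hi).eq_or_lt with h0 | hai
      · rw [← h0]
        have : (0:ℝ) ≤ (A / Bs) * b i :=
          mul_nonneg (div_nonneg hApos.le hBpos.le) (hb i hi)
        simp only [zero_mul, zero_add, zero_sub]
        linarith
      · have hbi : 0 < b i := by
          rcases (hb i hi).eq_or_lt with h0 | h
          · exact absurd (hab i hi h0.symm) (by linarith)
          · exact h
        have hx : 0 < (b i * A) / (a i * Bs) := by positivity
        have h1 := Real.log_le_sub_one_of_pos hx
        have hlogeq : Real.log (a i / b i) - Real.log (A / Bs)
            = - Real.log ((b i * A) / (a i * Bs)) := by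
          rw [← Real.log_inv, ← Real.log_div (by positivity) (by positivity)]
          congr 1
          field_simp
        have h2 : 1 - (b i * A) / (a i * Bs) ≤ Real.log (a i / b i) - Real.log (A / Bs) := by
          rw [hlogeq]; linarith
        have h3 : a i * (1 - (b i * A) / (a i * Bs)) = a i - (A / Bs) * b i := by
          field_simp
        nlinarith [mul_le_mul_of_nonneg_left h2 (le_of_lt hai)]
    calc A * Real.log (A / Bs)
        = ∑ i ∈ s, (a i * Real.log (A / Bs) + (a i - (A / Bs) * b i)) := by
          rw [Finset.sum_add_distrib, Finset.sum_sub_distrib, ← Finset.sum_mul,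
            ← Finset.mul_sum, ← hA, ← hBs, div_mul_cancel₀ _ hBpos.ne']
          ring
      _ ≤ ∑ i ∈ s, a i * Real.log (a i / b i) := Finset.sum_le_sum key

lemma mul_log_div_smul (t a b : ℝ) (ht : 0 ≤ t) :
    (t * a) * Real.log ((t * a) / (t * b)) = t * (a * Real.log (a / b)) := by
  rcases ht.eq_or_lt with h | h
  · simp [← h]
  · rw [mul_div_mul_left a b h.ne']; ring

lemma mutualInfo_eq {I J : Type*} [Fintype I] [Fintype J] (p : I → J → ℝ) :
    mutualInfo p
      = ∑ i, ∑ j, p i j * Real.log (p i j / ((∑ j', p i j') * (∑ i', p i' j))) := by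
  unfold mutualInfo
  refine Finset.sum_congr rfl fun i _ => Finset.sum_congr rfl fun j _ => ?_
  split_ifs with h
  · rw [h, zero_mul]
  · rfl

/-- Data-processing inequality for mutual information under a column-stochastic
post-processing of the first variable. -/
lemma dpi {I L N : Type*} [Fintype I] [Fintype L] [Fintype N]
    (p : I → N → ℝ) (T : L → I → ℝ)
    (hp : ∀ i n, 0 ≤ p i n) (hT : ∀ l i, 0 ≤ T l i) (hT1 : ∀ i, ∑ l, T l i = 1)
    (q : L → N → ℝ) (hq : ∀ l n, q l n = ∑ i, T l i * p i n) :
    mutualInfo q ≤ mutualInfo p := by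
  rw [mutualInfo_eq, mutualInfo_eq]
  have hq2 : ∀ n, ∑ l, q l n = ∑ i, p i n := by
    intro n
    simp only [hq]
    rw [Finset.sum_comm]
    exact Finset.sum_congr rfl fun i _ => by rw [← Finset.sum_mul, hT1, one_mul]
  have hq1 : ∀ l, ∑ n, q l n = ∑ i, T l i * (∑ n, p i n) := by
    intro l
    simp only [hq]
    rw [Finset.sum_comm]
    exact Finset.sum_congr rfl fun i _ => (Finset.mul_sum _ _ _).symm
  calc ∑ l, ∑ n, q l n * Real.log (q l n / ((∑ n', q l n') * (∑ l', q l' n)))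
      ≤ ∑ l, ∑ n, ∑ i, (T l i * p i n) *
          Real.log ((T l i * p i n) / (T l i * ((∑ n', p i n') * (∑ i', p i' n)))) := by
        refine Finset.sum_le_sum fun l _ => Finset.sum_le_sum fun n _ => ?_
        have hB : (∑ n', q l n') * (∑ l', q l' n)
            = ∑ i, T l i * ((∑ n', p i n') * (∑ i', p i' n)) := by
          rw [hq1 l, hq2 n, Finset.sum_mul]
          exact Finset.sum_congr rfl fun i _ => by ring
        rw [hq l n, hB]
        refine log_sum_ineq Finset.univ _ _ (fun i _ => mul_nonneg (hT l i) (hp i n))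
          (fun i _ => mul_nonneg (hT l i)
            (mul_nonneg (Finset.sum_nonneg fun n' _ => hp i n')
              (Finset.sum_nonneg fun i' _ => hp i' n))) ?_
        intro i _ hbi
        rcases mul_eq_zero.mp hbi with h | h
        · rw [h, zero_mul]
        · rcases mul_eq_zero.mp h with h | h
          · have : p i n = 0 :=
              (Finset.sum_eq_zero_iff_of_nonneg (fun n' _ => hp i n')).mp h n
                (Finset.mem_univ n)
            rw [this, mul_zero]
          · have : p i n = 0 :=
              (Finset.sum_eq_zero_iff_of_nonneg (fun i' _ => hp i' n)).mp h i
                (Finset.mem_univ i)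
            rw [this, mul_zero]
    _ = ∑ l, ∑ n, ∑ i, T l i *
          (p i n * Real.log (p i n / ((∑ n', p i n') * (∑ i', p i' n)))) := by
        refine Finset.sum_congr rfl fun l _ => Finset.sum_congr rfl fun n _ =>
          Finset.sum_congr rfl fun i _ => ?_
        exact mul_log_div_smul (T l i) (p i n) _ (hT l i)
    _ = ∑ n, ∑ i, ∑ l, T l i *
          (p i n * Real.log (p i n / ((∑ n', p i n') * (∑ i', p i' n)))) := by
        rw [Finset.sum_comm]
        exact Finset.sum_congr rfl fun n _ => Finset.sum_comm
    _ = ∑ n, ∑ i, p i n * Real.log (p i n / ((∑ n', p i n') * (∑ i', p i' n))) := by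
        refine Finset.sum_congr rfl fun n _ => Finset.sum_congr rfl fun i _ => ?_
        rw [← Finset.sum_mul, hT1, one_mul]
    _ = ∑ i, ∑ n, p i n * Real.log (p i n / ((∑ n', p i n') * (∑ i', p i' n))) :=
        Finset.sum_comm

lemma trace_mul_matE {d : ℕ} (M : Matrix (Fin d) (Fin d) ℂ) (i : Fin d) :
    (M * matE i).trace = M i i := by
  simp [matE, Matrix.trace, Matrix.diag, Matrix.mul_apply, Matrix.single,
    Finset.sum_ite_eq, ite_and]

/-- Main trace expansion. -/
lemma trace_sigma {d m : ℕ} (p : Fin d → ℝ) (Ψ : Fin d → Fin m → ℂ)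
    (M : Matrix (Fin d) (Fin d) ℂ) (Yn : Matrix (Fin m) (Fin m) ℂ) :
    ((M ⊗ₖ Yn) * sigmaSF p Ψ).trace
      = ∑ i, (p i : ℂ) * (M i i * (Yn * projVec (Ψ i)).trace) := by
  unfold sigmaSF
  rw [Finset.mul_sum, Matrix.trace_sum]
  refine Finset.sum_congr rfl fun i _ => ?_
  rw [Matrix.mul_smul, Matrix.trace_smul, ← Matrix.mul_kronecker_mul,
    Matrix.trace_kronecker, trace_mul_matE]
  simp [smul_eq_mul]

/-- trace of Y times rank-one projector as an inner product. -/
lemma trace_mul_projVec {m : ℕ} (Yn : Matrix (Fin m) (Fin m) ℂ) (v : Fin m → ℂ) :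
    (Yn * projVec v).trace = star v ⬝ᵥ Yn.mulVec v := by
  simp only [Matrix.trace, Matrix.diag, Matrix.mul_apply, projVec, Matrix.of_apply,
    dotProduct, Matrix.mulVec, Pi.star_apply, Finset.mul_sum]
  refine Finset.sum_congr rfl fun k _ => Finset.sum_congr rfl fun l _ => ?_
  simp only [Complex.star_def]
  ring

lemma trace_mul_projVec_proj {m : ℕ} (Yn : Matrix (Fin m) (Fin m) ℂ)
    (hH : Yn.IsHermitian) (hI : Yn * Yn = Yn) (v : Fin m → ℂ) :
    (Yn * projVec v).trace = ((∑ k, Complex.normSq (Yn.mulVec v k) : ℝ) : ℂ) := by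
  rw [trace_mul_projVec]
  have h1 : star (Yn.mulVec v) ⬝ᵥ Yn.mulVec v = star v ⬝ᵥ Yn.mulVec v := by
    calc star (Yn.mulVec v) ⬝ᵥ Yn.mulVec v
        = (Matrix.vecMul (star v) Ynᴴ) ⬝ᵥ Yn.mulVec v := by rw [Matrix.star_mulVec]
      _ = (Matrix.vecMul (star v) Yn) ⬝ᵥ Yn.mulVec v := by rw [hH.eq]
      _ = (Matrix.vecMul (Matrix.vecMul (star v) Yn) Yn) ⬝ᵥ v := by
          rw [Matrix.dotProduct_mulVec]
      _ = (Matrix.vecMul (star v) (Yn * Yn)) ⬝ᵥ v := by rw [Matrix.vecMul_vecMul]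
      _ = (Matrix.vecMul (star v) Yn) ⬝ᵥ v := by rw [hI]
      _ = star v ⬝ᵥ Yn.mulVec v := (Matrix.dotProduct_mulVec _ _ _).symm
  rw [← h1]
  simp only [dotProduct, Pi.star_apply, Complex.star_def, Complex.ofReal_sum]
  exact Finset.sum_congr rfl fun k _ => by
    rw [Complex.normSq_eq_conj_mul_self]

/-- Eq. (35) (observable optimality): any fragment measurement `Y` reveals at least as
much information about the pointer observable `A` (projectors `E_ii`) as about any other
system observable `B`: `I(B:Y) ≤ I(A:Y)`. -/
theorem stmt_16 {d m : ℕ} {L N : Type*}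
    [Fintype L] [DecidableEq L] [Fintype N] [DecidableEq N]
    (p : Fin d → ℝ) (hp0 : ∀ i, 0 ≤ p i) (hp1 : ∑ i, p i = 1)
    (Ψ : Fin d → Fin m → ℂ)
    (hΨ : ∀ i j, cinner (Ψ i) (Ψ j) = if i = j then 1 else 0)
    (B : L → Matrix (Fin d) (Fin d) ℂ) (hB : IsProjMeasurement B)
    (Y : N → Matrix (Fin m) (Fin m) ℂ) (hY : IsProjMeasurement Y)
    (pAY : Fin d → N → ℝ)
    (hAY : ∀ i n, pAY i n = (((matE i ⊗ₖ Y n) * sigmaSF p Ψ).trace).re)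
    (pBY : L → N → ℝ)
    (hBY : ∀ l n, pBY l n = (((B l ⊗ₖ Y n) * sigmaSF p Ψ).trace).re) :
    mutualInfo pBY ≤ mutualInfo pAY := by
  -- abbreviations
  set r : Fin d → N → ℝ := fun i n => ∑ k, Complex.normSq ((Y n).mulVec (Ψ i) k) with hr
  set T : L → Fin d → ℝ := fun l i => ∑ j, Complex.normSq ((B l) i j) with hT
  have hrnn : ∀ i n, 0 ≤ r i n :=
    fun i n => Finset.sum_nonneg fun k _ => Complex.normSq_nonneg _
  have hTnn : ∀ l i, 0 ≤ T l i :=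
    fun l i => Finset.sum_nonneg fun j _ => Complex.normSq_nonneg _
  have htr : ∀ i n, (Y n * projVec (Ψ i)).trace = ((r i n : ℝ) : ℂ) := by
    intro i n
    exact trace_mul_projVec_proj (Y n) (hY.1 n) (by simpa using hY.2.1 n n) (Ψ i)
  have hBr : ∀ l i, (B l) i i = ((T l i : ℝ) : ℂ) := by
    intro l i
    have hIdem : B l * B l = B l := by simpa using hB.2.1 l l
    have hexp : (B l) i i = ∑ j, (B l) i j * (B l) j i := by
      conv_lhs => rw [← hIdem]
      rw [Matrix.mul_apply]
    rw [hexp, hT, Complex.ofReal_sum]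
    refine Finset.sum_congr rfl fun j _ => ?_
    have hj : (B l) j i = (starRingEnd ℂ) ((B l) i j) := by
      conv_lhs => rw [← (hB.1 l).eq]
      rfl
    rw [hj, Complex.mul_conj]
  have hT1 : ∀ i, ∑ l, T l i = 1 := by
    intro i
    have h1 : ((∑ l, T l i : ℝ) : ℂ) = 1 := by
      rw [Complex.ofReal_sum]
      calc (∑ l, ((T l i : ℝ) : ℂ)) = ∑ l, (B l) i i :=
            Finset.sum_congr rfl fun l _ => (hBr l i).symm
        _ = (∑ l, B l) i i := by rw [Matrix.sum_apply]
        _ = (1 : Matrix (Fin d) (Fin d) ℂ) i i := by rw [hB.2.2]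
        _ = 1 := Matrix.one_apply_eq i
    exact_mod_cast h1
  have hAYf : ∀ i n, pAY i n = p i * r i n := by
    intro i n
    rw [hAY i n, trace_sigma]
    have hterm : ∀ i', (p i' : ℂ) * ((matE i) i' i' * (Y n * projVec (Ψ i')).trace)
        = if i = i' then ((p i * r i n : ℝ) : ℂ) else 0 := by
      intro i'
      rw [htr i' n]
      by_cases h : i = i'
      · subst h
        simp only [matE, Matrix.single_apply_same, if_pos rfl, one_mul]
        push_cast
        ring
      · simp [matE, Matrix.single, h]
    rw [Finset.sum_congr rfl fun i' _ => hterm i']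
    simp
  have hAYnn : ∀ i n, 0 ≤ pAY i n := by
    intro i n
    rw [hAYf i n]
    exact mul_nonneg (hp0 i) (hrnn i n)
  have hBYf : ∀ l n, pBY l n = ∑ i, T l i * pAY i n := by
    intro l n
    rw [hBY l n, trace_sigma]
    have hterm : ∀ i, (p i : ℂ) * ((B l) i i * (Y n * projVec (Ψ i)).trace)
        = ((T l i * (p i * r i n) : ℝ) : ℂ) := by
      intro i
      rw [htr i n, hBr l i]
      push_cast
      ring
    rw [Finset.sum_congr rfl fun i _ => hterm i, ← Complex.ofReal_sum, Complex.ofReal_re]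
    exact Finset.sum_congr rfl fun i _ => by rw [hAYf i n]
  exact dpi pAY T hAYnn hTnn hT1 pBY hBYf
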